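/- Fix q ∈ (0,1] with k = qT an integer, and let n samples each be independently assigned to a uniformly random k-subset of T trees. For a uniformly random deleted sample, the ratio of the expected total retraining work E[Σ_{t : sample ∈ S^(t)} |S^(t)|] to the naïve retraining work T·n converges to q² as n → ∞; precisely, E[N_occ]/(T n) = q² + q(1−q)/n ≤ q² + q/n. -/

import Mathlib

open Finset

namespace Stmt19

variable (T k : ℕ)

abbrev S := {s : Finset (Fin T) // s.card = k}

def u (t : Fin T) (s : S T k) : ℚ := if t ∈ s.1 then 1 else 0

def A (t : Fin T) : ℕ := (Finset.univ.filter (fun s : S T k => t ∈ s.1)).card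

lemma sum_u (t : Fin T) : ∑ s : S T k, u T k t s = A T k t := by
  simp only [u, A]
  exact_mod_cast Finset.sum_boole _ _

lemma A_const (t t' : Fin T) : A T k t = A T k t' := by
  classical
  refine Finset.card_bij'
    (fun s _ => (⟨s.1.map (Equiv.swap t t').toEmbedding, by
      rw [Finset.card_map]; exact s.2⟩ : S T k))
    (fun s _ => (⟨s.1.map (Equiv.swap t t').toEmbedding, by
      rw [Finset.card_map]; exact s.2⟩ : S T k)) ?_ ?_ ?_ ?_
  · intro a ha
    simp only [mem_filter, mem_univ, true_and] at ha ⊢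
    rw [Finset.mem_map_equiv]
    simpa using ha
  · intro a ha
    simp only [mem_filter, mem_univ, true_and] at ha ⊢
    rw [Finset.mem_map_equiv]
    simpa using ha
  · intro a ha
    apply Subtype.ext
    ext x
    simp [Finset.mem_map_equiv]
  · intro a ha
    apply Subtype.ext
    ext x
    simp [Finset.mem_map_equiv]

lemma sum_A : ∑ t : Fin T, A T k t = Fintype.card (S T k) * k := by
  classical
  simp only [A, Finset.card_filter]
  rw [Finset.sum_comm]
  have h : ∀ s : S T k, (∑ t : Fin T, if t ∈ s.1 then (1:ℕ) else 0) = k := by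
    intro s
    rw [Finset.sum_boole]
    simp only [Finset.filter_univ_mem]
    exact_mod_cast s.2
  simp only [h, Finset.sum_const, Finset.card_univ, smul_eq_mul]

lemma pair_count {n : ℕ} (i j : Fin n) (t : Fin T) :
    ∑ f : Fin n → S T k, u T k t (f i) * u T k t (f j) =
      if i = j then (A T k t : ℚ) * (Fintype.card (S T k) : ℚ) ^ (n - 1)
      else (A T k t : ℚ) ^ 2 * (Fintype.card (S T k) : ℚ) ^ (n - 2) := by
  classical
  have key : ∀ f : Fin n → S T k, u T k t (f i) * u T k t (f j) =
      ∏ m : Fin n, (if m ∈ ({i, j} : Finset (Fin n)) then u T k t (f m) else 1) := by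
    intro f
    rw [Finset.prod_ite_mem, Finset.univ_inter]
    rcases eq_or_ne i j with rfl | h
    · rw [Finset.pair_eq_singleton, Finset.prod_singleton, u]
      split_ifs <;> ring
    · rw [Finset.prod_pair h]
  simp_rw [key]
  rw [← Fintype.piFinset_univ,
    ← Finset.prod_univ_sum (fun _ : Fin n => (Finset.univ : Finset (S T k)))
      (fun m x => if m ∈ ({i,j} : Finset (Fin n)) then u T k t x else 1)]
  have hs : ∀ m : Fin n, (∑ x : S T k, if m ∈ ({i,j} : Finset (Fin n)) then u T k t x else 1)
      = if m ∈ ({i,j} : Finset (Fin n)) then (A T k t : ℚ) else (Fintype.card (S T k) : ℚ) := by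
    intro m; split_ifs
    · exact sum_u T k t
    · simp [Finset.card_univ]
  simp_rw [hs]
  rw [Finset.prod_ite, Finset.prod_const, Finset.prod_const, Finset.filter_univ_mem,
    Finset.filter_not, Finset.filter_univ_mem,
    Finset.card_sdiff_of_subset (Finset.subset_univ _), Finset.card_univ, Fintype.card_fin]
  rcases eq_or_ne i j with rfl | h
  · rw [if_pos rfl, Finset.pair_eq_singleton, Finset.card_singleton, pow_one]
  · rw [if_neg h, Finset.card_pair h]

lemma pair_sum {n : ℕ} (X Y : ℚ) (hn : 0 < n) :
    ∑ i : Fin n, ∑ j : Fin n, (if i = j then X else Y) = n * (X + ((n : ℚ) - 1) * Y) := by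
  classical
  have h : ∀ i : Fin n, ∑ j : Fin n, (if i = j then X else Y) = X + ((n : ℚ) - 1) * Y := by
    intro i
    have : ∀ j : Fin n, (if i = j then X else Y) = Y + (if i = j then X - Y else 0) := by
      intro j; split_ifs <;> ring
    simp_rw [this, Finset.sum_add_distrib, Finset.sum_const, Finset.sum_ite_eq,
      Finset.mem_univ, if_pos, Finset.card_univ, Fintype.card_fin, nsmul_eq_mul]
    ring
  simp_rw [h, Finset.sum_const, Finset.card_univ, Fintype.card_fin, nsmul_eq_mul]

lemma hN {n : ℕ} (f : Fin n → S T k) (i : Fin n) :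
    ((∑ t ∈ (f i : Finset (Fin T)),
        (Finset.univ.filter (fun j : Fin n => t ∈ (f j : Finset (Fin T)))).card : ℕ) : ℚ)
      = ∑ t : Fin T, ∑ j : Fin n, u T k t (f i) * u T k t (f j) := by
  classical
  push_cast
  have h1 : ∀ t : Fin T,
      ((Finset.univ.filter (fun j : Fin n => t ∈ (f j : Finset (Fin T)))).card : ℚ)
        = ∑ j : Fin n, u T k t (f j) := by
    intro t
    simp [u, Finset.sum_boole]
  calc (∑ t ∈ (f i : Finset (Fin T)),
        ((Finset.univ.filter (fun j : Fin n => t ∈ (f j : Finset (Fin T)))).card : ℚ))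
      = ∑ t ∈ (f i : Finset (Fin T)), ∑ j : Fin n, u T k t (f j) :=
        Finset.sum_congr rfl fun t _ => h1 t
    _ = ∑ t : Fin T, ∑ j : Fin n, u T k t (f i) * u T k t (f j) := by
        rw [← Finset.filter_univ_mem ((f i : Finset (Fin T))), Finset.sum_filter]
        refine Finset.sum_congr rfl fun t _ => ?_
        simp only [u, ite_mul, one_mul, zero_mul]
        split_ifs <;> simp

lemma total {n : ℕ} (hn : 0 < n) :
    (∑ f : Fin n → S T k, ∑ i : Fin n,
      ((∑ t ∈ (f i : Finset (Fin T)),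
        (Finset.univ.filter (fun j : Fin n => t ∈ (f j : Finset (Fin T)))).card : ℕ) : ℚ))
    = ∑ t : Fin T, (n : ℚ) * ((A T k t : ℚ) * (Fintype.card (S T k) : ℚ) ^ (n - 1)
        + ((n : ℚ) - 1) * ((A T k t : ℚ) ^ 2 * (Fintype.card (S T k) : ℚ) ^ (n - 2))) := by
  classical
  simp_rw [hN]
  have swap1 : (∑ f : Fin n → S T k, ∑ i : Fin n, ∑ t : Fin T, ∑ j : Fin n,
      u T k t (f i) * u T k t (f j))
      = ∑ i : Fin n, ∑ t : Fin T, ∑ j : Fin n, ∑ f : Fin n → S T k,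
          u T k t (f i) * u T k t (f j) := by
    rw [Finset.sum_comm]
    refine Finset.sum_congr rfl fun i _ => ?_
    rw [Finset.sum_comm]
    refine Finset.sum_congr rfl fun t _ => ?_
    exact Finset.sum_comm
  rw [swap1, Finset.sum_comm]
  refine Finset.sum_congr rfl fun t _ => ?_
  simp_rw [pair_count T k]
  rw [pair_sum _ _ hn]

end Stmt19

/-- With k = qT and n samples independently assigned to uniformly random k-subsets of T
trees, the expected retraining work for a uniformly random deleted sample, divided by the
naïve work T·n, equals q² + q(1-q)/n, which is at most q² + q/n. -/
theorem stmt19 (T k n : ℕ) (hT : 0 < T) (hn : 0 < n) (hkT : k ≤ T)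
    (q : ℚ) (hq0 : 0 < q) (hq1 : q ≤ 1) (hk : (k : ℚ) = q * T) :
    let Ω := (Finset.univ : Finset (Fin n → {s : Finset (Fin T) // s.card = k}))
    let N : (Fin n → {s : Finset (Fin T) // s.card = k}) → Fin n → ℕ :=
      fun f i => ∑ t ∈ (f i : Finset (Fin T)),
        (Finset.univ.filter (fun j : Fin n => t ∈ (f j : Finset (Fin T)))).card
    let E : ℚ := (∑ f ∈ Ω, ∑ i : Fin n, (N f i : ℚ)) / ((Ω.card : ℚ) * n)
    E / (T * n) = q ^ 2 + q * (1 - q) / n ∧ E / (T * n) ≤ q ^ 2 + q / n := by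
  intro Ω N E
  classical
  have hT' : ((T:ℚ)) ≠ 0 := by positivity
  have hn0 : (0:ℚ) < (n:ℚ) := by exact_mod_cast hn
  have hn' : ((n:ℚ)) ≠ 0 := ne_of_gt hn0
  have hne : Nonempty (Stmt19.S T k) := by
    obtain ⟨s, -, hs⟩ := Finset.exists_subset_card_eq
      (s := (Finset.univ : Finset (Fin T))) (n := k) (by simpa using hkT)
    exact ⟨⟨s, hs⟩⟩
  set M := Fintype.card (Stmt19.S T k) with hM
  have hM0 : 0 < M := Fintype.card_pos
  have hMQ : ((M:ℚ)) ≠ 0 := by positivity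
  have hA : ∀ t : Fin T, (Stmt19.A T k t : ℚ) = q * M := by
    intro t
    have h1 : ∑ t' : Fin T, Stmt19.A T k t' = M * k := Stmt19.sum_A T k
    have h2 : ∑ t' : Fin T, Stmt19.A T k t' = T * Stmt19.A T k t := by
      rw [Finset.sum_congr rfl (fun t' _ => Stmt19.A_const T k t' t)]
      simp [Finset.card_univ, mul_comm]
    have h3 : (T:ℚ) * (Stmt19.A T k t : ℚ) = (M:ℚ) * (q * T) := by
      rw [← hk]; exact_mod_cast (h2.symm.trans h1)
    apply mul_left_cancel₀ hT'
    rw [h3]; ring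
  have hΩ : (Ω.card : ℚ) = (M:ℚ)^n := by
    simp only [Ω]
    rw [Finset.card_univ, Fintype.card_fun, Fintype.card_fin]
    push_cast
    rfl
  have htot : (∑ f ∈ Ω, ∑ i : Fin n, (N f i : ℚ))
      = (T:ℚ) * ((n:ℚ) * (q * M * (M:ℚ)^(n-1)
          + ((n:ℚ)-1) * ((q * M)^2 * (M:ℚ)^(n-2)))) := by
    simp only [Ω, N]
    rw [Stmt19.total T k hn]
    simp_rw [hA]
    rw [Finset.sum_const, Finset.card_univ, Fintype.card_fin, nsmul_eq_mul]
  have hE : E = (T:ℚ) * (q + ((n:ℚ)-1) * q^2) := by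
    simp only [E]
    rw [htot, hΩ]
    rcases n with _ | _ | l
    · exact absurd hn (by omega)
    · norm_num
      field_simp
    · have e1 : (l + 2) - 1 = l + 1 := rfl
      have e2 : (l + 2) - 2 = l := rfl
      rw [e1, e2]
      have p1 : ((M:ℚ))^(l+2) = (M:ℚ)^(l+1) * M := by ring
      have p2 : ((M:ℚ))^(l+1) = (M:ℚ)^l * M := by ring
      push_cast
      field_simp
      ring
  have heq : E / (T * n) = q ^ 2 + q * (1 - q) / n := by
    rw [hE]
    field_simp
    ring
  refine ⟨heq, heq ▸ ?_⟩
  have h2 : q * (1 - q) ≤ q := by nlinarith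
  have := (div_le_div_iff_of_pos_right hn0).mpr h2
  linarith
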